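/- Let M be a non-zero bi-nilpotent Dieudonné module over k which is generated by an element z ∈ M, with d = dim_k(M/FM) and c = dim_k(M/VM). Then the family consisting of F^i z for 1 ≤ i ≤ c together with V^i z for 0 ≤ i ≤ d−1 is a W-basis of M; in particular M has rank h = c + d as a W-module. -/

import Mathlib

noncomputable section

namespace DieudonneStmt


open Submodule Module Function


open Submodule Module

/-! ### General vector space lemma: least size of a generating family over a subspace -/

lemma isLeast_gen_over (K V : Type*) [Field K] [AddCommGroup V] [Module K V]
    [FiniteDimensional K V] (U : Submodule K V) :
    IsLeast {n : ℕ | ∃ x : Fin n → V, U ⊔ Submodule.span K (Set.range x) = ⊤}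
      (Module.finrank K (V ⧸ U)) := by
  classical
  constructor
  · -- membership: lift a basis of the quotient
    set q := Module.finrank K (V ⧸ U)
    obtain ⟨b⟩ : Nonempty (Basis (Fin q) K (V ⧸ U)) := ⟨Module.finBasis K (V ⧸ U)⟩
    choose x hx using fun i : Fin q => Submodule.Quotient.mk_surjective U (b i)
    refine ⟨x, ?_⟩
    rw [eq_top_iff]
    intro v _
    have hv : U.mkQ v ∈ Submodule.span K (Set.range b) := by
      rw [b.span_eq]; trivial
    rw [mem_span_range_iff_exists_fun] at hv
    obtain ⟨c, hc⟩ := hv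
    have h1 : U.mkQ (v - ∑ i, c i • x i) = 0 := by
      simp only [map_sub, map_sum, map_smul]
      have : ∀ i, U.mkQ (x i) = b i := hx
      simp only [this]
      rw [hc]; simp
    rw [Submodule.mkQ_apply, Submodule.Quotient.mk_eq_zero] at h1
    have h2 : (∑ i, c i • x i) ∈ Submodule.span K (Set.range x) :=
      Submodule.sum_mem _ fun i _ => Submodule.smul_mem _ _ (Submodule.subset_span ⟨i, rfl⟩)
    have : v = (v - ∑ i, c i • x i) + ∑ i, c i • x i := by abel
    rw [this]
    exact Submodule.add_mem _ (Submodule.mem_sup_left h1) (Submodule.mem_sup_right h2)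
  · -- lower bound
    rintro n ⟨x, hx⟩
    have hspan : Submodule.span K (Set.range (U.mkQ ∘ x)) = ⊤ := by
      rw [eq_top_iff]
      rintro v -
      obtain ⟨w, rfl⟩ := Submodule.Quotient.mk_surjective U v
      have hw : w ∈ U ⊔ Submodule.span K (Set.range x) := hx ▸ trivial
      rw [Submodule.mem_sup] at hw
      obtain ⟨u, hu, y, hy, rfl⟩ := hw
      have : U.mkQ (u + y) = U.mkQ y := by
        simp [Submodule.mkQ_apply, Submodule.Quotient.mk_eq_zero, hu,
          Submodule.Quotient.mk_add, (Submodule.Quotient.mk_eq_zero U).2 hu]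
      rw [← Submodule.mkQ_apply, this]
      have := Submodule.mem_map_of_mem (f := U.mkQ) hy
      rw [Submodule.map_span, ← Set.range_comp] at this
      exact this
    have h1 : Module.finrank K (V ⧸ U) =
        Module.finrank K (Submodule.span K (Set.range (U.mkQ ∘ x))) := by
      rw [hspan, finrank_top]
    have h2 : (Set.range (U.mkQ ∘ x)).finrank K ≤ Fintype.card (Fin n) :=
      finrank_range_le_card _
    rw [h1]
    simpa [Set.finrank] using h2


open Submodule Module Function

section Semi
variable {R : Type*} [CommRing R] {M : Type*} [AddCommGroup M] [Module R M]
variable {φ : R ≃+* R} {F : M → M}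

lemma F_zero (hadd : ∀ x y, F (x + y) = F x + F y) : F 0 = 0 := by
  have := hadd 0 0
  simpa using this.symm

lemma iter_add (hadd : ∀ x y, F (x + y) = F x + F y) :
    ∀ n x y, F^[n] (x + y) = F^[n] x + F^[n] y := by
  intro n
  induction n with
  | zero => simp
  | succ n ih =>
    intro x y
    simp only [Function.iterate_succ_apply']
    rw [ih, hadd]

lemma iter_zero (hadd : ∀ x y, F (x + y) = F x + F y) : ∀ n, F^[n] (0 : M) = 0 := by
  intro n; induction n with
  | zero => rfl
  | succ n ih => rw [Function.iterate_succ_apply', ih, F_zero hadd]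

lemma iter_sum (hadd : ∀ x y, F (x + y) = F x + F y) {ι : Type*} (s : Finset ι)
    (g : ι → M) (n : ℕ) : F^[n] (∑ i ∈ s, g i) = ∑ i ∈ s, F^[n] (g i) := by
  classical
  induction s using Finset.induction with
  | empty => simp [iter_zero hadd]
  | insert _ _ h ih => rw [Finset.sum_insert h, Finset.sum_insert h, iter_add hadd, ih]

lemma iter_smul (hsmul : ∀ a x, F (a • x) = φ a • F x) (I : Ideal R)
    (hφI : ∀ a, φ a ∈ I ↔ a ∈ I) :
    ∀ n (a : R) (x : M), ∃ b : R, F^[n] (a • x) = b • F^[n] x ∧ (a ∈ I ↔ b ∈ I) := by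
  intro n
  induction n with
  | zero => exact fun a x => ⟨a, rfl, Iff.rfl⟩
  | succ n ih =>
    intro a x
    obtain ⟨b, hb, hbI⟩ := ih (φ a) (F x)
    refine ⟨b, ?_, (hφI a).symm.trans hbI⟩
    rw [Function.iterate_succ_apply, hsmul, hb, Function.iterate_succ_apply]

lemma iter_mem {Q : Submodule R M} (hFQ : ∀ x ∈ Q, F x ∈ Q) :
    ∀ n, ∀ x ∈ Q, F^[n] x ∈ Q := by
  intro n
  induction n with
  | zero => exact fun x hx => hx
  | succ n ih =>
    intro x hx
    rw [Function.iterate_succ_apply']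
    exact hFQ _ (ih x hx)

/-- The key independence-mod-`P` lemma, used for both the `F`- and `V`-families. -/
lemma indep_mod (hadd : ∀ x y, F (x + y) = F x + F y)
    (hsmul : ∀ a x, F (a • x) = φ a • F x)
    (I : Ideal R) (hφI : ∀ a, φ a ∈ I ↔ a ∈ I)
    (P : Submodule R M) (hFP : ∀ x ∈ P, F x ∈ P)
    (hIP : ∀ a ∈ I, ∀ x : M, a • x ∈ P)
    (hq : ∀ (a : R) (x : M), a • x ∈ P → x ∉ P → a ∈ I)
    (w : M) (s : ℕ) (htail : ∀ m, s < m → F^[m] w ∈ P) (hsnot : 0 < s → F^[s] w ∉ P) :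
    ∀ a : Fin s → R, (∑ i, a i • F^[(i : ℕ) + 1] w) ∈ P → ∀ i, a i ∈ I := by
  classical
  intro a hsum
  by_contra hcon
  push_neg at hcon
  have hne : {j : ℕ | ∃ h : j < s, a ⟨j, h⟩ ∉ I}.Nonempty := by
    obtain ⟨i, hi⟩ := hcon
    exact ⟨i, i.2, hi⟩
  set j₀ := Nat.find hne with hj₀def
  obtain ⟨hj₀s, hj₀I⟩ := Nat.find_spec hne
  have hmin : ∀ j (hj : j < s), j < j₀ → a ⟨j, hj⟩ ∈ I := by
    intro j hj hjlt
    by_contra h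
    exact Nat.find_min hne hjlt ⟨hj, h⟩
  -- apply F^[s - 1 - j₀] to the sum
  set m := s - 1 - j₀ with hm
  have hFm : F^[m] (∑ i, a i • F^[(i : ℕ) + 1] w) ∈ P := iter_mem hFP m _ hsum
  rw [iter_sum hadd] at hFm
  -- rewrite each term
  choose b hb hbI using fun i : Fin s => iter_smul hsmul I hφI m (a i) (F^[(i : ℕ) + 1] w)
  have hterm : ∀ i : Fin s, F^[m] (a i • F^[(i : ℕ) + 1] w) = b i • F^[m + ((i : ℕ) + 1)] w := by
    intro i
    rw [hb i, ← Function.iterate_add_apply]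
  simp only [hterm] at hFm
  -- split off the j₀ term
  have hj0 : (⟨j₀, hj₀s⟩ : Fin s) ∈ Finset.univ := Finset.mem_univ _
  rw [← Finset.add_sum_erase _ _ hj0] at hFm
  have hrest : (∑ i ∈ Finset.univ.erase ⟨j₀, hj₀s⟩, b i • F^[m + ((i : ℕ) + 1)] w) ∈ P := by
    refine Submodule.sum_mem _ ?_
    intro i hi
    rcases lt_or_gt_of_ne (fun h : (i : ℕ) = j₀ => (Finset.mem_erase.1 hi).1 (Fin.ext h)) with h | h
    · exact hIP _ ((hbI i).1 (hmin _ i.2 h)) _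
    · have : s < m + ((i : ℕ) + 1) := by omega
      exact Submodule.smul_mem _ _ (htail _ this)
  have hj' : b ⟨j₀, hj₀s⟩ • F^[m + (j₀ + 1)] w ∈ P := by
    have := Submodule.sub_mem _ hFm hrest
    simpa using this
  have hms : m + (j₀ + 1) = s := by omega
  rw [hms] at hj'
  exact hj₀I ((hbI _).2 (hq _ _ hj' (hsnot (by omega))))

end Semi

open Submodule Module Function

section Transfer
variable {R : Type*} [CommRing R] {M : Type*} [AddCommGroup M] [Module R M] (I : Ideal R)

local notation "Mbar" => M ⧸ (I • ⊤ : Submodule R M)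
local notation "π" => Submodule.mkQ (I • ⊤ : Submodule R M)

lemma pi_smul (a : R) (x : M) :
    (Ideal.Quotient.mk I a) • (π x) = π (a • x) := rfl

lemma T1a {T : Set M} {x : M} (hx : x ∈ Submodule.span R T ⊔ (I • ⊤ : Submodule R M)) :
    π x ∈ Submodule.span (R ⧸ I) (π '' T) := by
  rw [Submodule.mem_sup] at hx
  obtain ⟨y, hy, w, hw, rfl⟩ := hx
  have hw0 : π w = 0 := (Submodule.Quotient.mk_eq_zero _).2 hw
  rw [map_add, hw0, add_zero]
  induction hy using Submodule.span_induction with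
  | mem u hu => exact Submodule.subset_span ⟨u, hu, rfl⟩
  | zero => simp
  | add u v _ _ hu hv => rw [map_add]; exact Submodule.add_mem _ hu hv
  | smul a u _ hu =>
    rw [← pi_smul]
    exact Submodule.smul_mem _ _ hu

lemma T1b {T : Set M} {y : Mbar} (hy : y ∈ Submodule.span (R ⧸ I) (π '' T)) :
    ∃ x ∈ Submodule.span R T, π x = y := by
  induction hy using Submodule.span_induction with
  | mem u hu =>
    obtain ⟨x, hx, rfl⟩ := hu
    exact ⟨x, Submodule.subset_span hx, rfl⟩
  | zero => exact ⟨0, Submodule.zero_mem _, map_zero _⟩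
  | add u v _ _ hu hv =>
    obtain ⟨x, hx, rfl⟩ := hu
    obtain ⟨x', hx', rfl⟩ := hv
    exact ⟨x + x', Submodule.add_mem _ hx hx', map_add _ _ _⟩
  | smul a u _ hu =>
    obtain ⟨x, hx, rfl⟩ := hu
    obtain ⟨a', rfl⟩ := Ideal.Quotient.mk_surjective a
    exact ⟨a' • x, Submodule.smul_mem _ _ hx, (pi_smul I a' x).symm⟩

lemma T1c {T : Set M} :
    Submodule.span (R ⧸ I) (π '' T) = ⊤ ↔
      Submodule.span R T ⊔ (I • ⊤ : Submodule R M) = ⊤ := by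
  constructor
  · intro h
    rw [eq_top_iff]
    intro x _
    have : π x ∈ Submodule.span (R ⧸ I) (π '' T) := by rw [h]; trivial
    obtain ⟨y, hy, hyx⟩ := T1b I this
    have : x - y ∈ (I • ⊤ : Submodule R M) := by
      rw [← Submodule.Quotient.mk_eq_zero, Submodule.Quotient.mk_sub]
      change π x - π y = 0
      rw [hyx]; simp
    have hx : x = y + (x - y) := by abel
    rw [hx]
    exact Submodule.add_mem _ (Submodule.mem_sup_left hy) (Submodule.mem_sup_right this)
  · intro h
    rw [eq_top_iff]
    intro y _
    obtain ⟨x, rfl⟩ := Submodule.Quotient.mk_surjective _ y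
    exact T1a I (by rw [h]; trivial)

lemma T2 {ι : Type*} [Fintype ι] (g : ι → M)
    (h : ∀ a : ι → R, (∑ i, a i • g i) ∈ (I • ⊤ : Submodule R M) → ∀ i, a i ∈ I) :
    LinearIndependent (R ⧸ I) (fun i => π (g i)) := by
  classical
  rw [Fintype.linearIndependent_iff]
  intro gbar hgbar
  choose a ha using fun i => Ideal.Quotient.mk_surjective (gbar i)
  have : π (∑ i, a i • g i) = 0 := by
    rw [map_sum]
    rw [← hgbar]
    congr 1
    ext i
    rw [← ha i, pi_smul]
  rw [Submodule.mkQ_apply, Submodule.Quotient.mk_eq_zero] at this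
  intro i
  rw [← ha i, Ideal.Quotient.eq_zero_iff_mem]
  exact h a this i

/-- Coordinates of an element of `I • ⊤` w.r.t. a basis lie in `I`. -/
lemma coords_mem {ι : Type*} (b : Basis ι R M) {x : M} (hx : x ∈ (I • ⊤ : Submodule R M)) :
    ∀ i, b.repr x i ∈ I := by
  refine Submodule.smul_induction_on hx ?_ ?_
  · intro r hr n _ i
    rw [map_smul]
    exact I.mul_mem_right _ hr
  · intro x y hx hy i
    rw [map_add]
    exact I.add_mem (hx i) (hy i)

/-- The image of a finite basis in `M ⧸ I•⊤` is a basis over `R ⧸ I`. -/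
def quotientBasis {ι : Type*} [Fintype ι] (b : Basis ι R M) :
    Basis ι (R ⧸ I) Mbar := by
  refine Basis.mk (v := fun i => π (b i)) ?_ ?_
  · refine T2 I _ ?_
    intro a ha i
    have h1 := coords_mem I b ha i
    classical
    rw [map_sum, Finset.sum_apply'] at h1
    have h2 : (∑ k, (b.repr ((a k) • b k)) i) = a i := by
      simp [Finsupp.single_apply, Finset.sum_ite_eq']
    rwa [h2] at h1
  · have h := (T1c (M := M) I (T := Set.range b)).2 (by rw [b.span_eq]; simp)
    rw [show (Set.range fun i => π (b i)) = π '' Set.range b from Set.range_comp _ _]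
    exact h.ge

lemma quotientBasis_apply {ι : Type*} [Fintype ι] (b : Basis ι R M) (i : ι) :
    quotientBasis I b i = π (b i) := by
  rw [quotientBasis, Basis.mk_apply]


lemma Tsets (g : Set M) (hple : (I • ⊤ : Submodule R M) ≤ Submodule.span R g) :
    {n : ℕ | ∃ x : Fin n → M,
      Submodule.span R g ⊔ Submodule.span R (Set.range x) = ⊤}
    = {n : ℕ | ∃ x : Fin n → Mbar,
        Submodule.span (R ⧸ I) (π '' g) ⊔ Submodule.span (R ⧸ I) (Set.range x) = ⊤} := by
  classical
  ext n
  simp only [Set.mem_setOf_eq]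
  constructor
  · rintro ⟨x, hx⟩
    refine ⟨fun i => π (x i), ?_⟩
    rw [show (Set.range fun i => π (x i)) = π '' Set.range x from Set.range_comp _ _,
      ← Submodule.span_union, ← Set.image_union, T1c I, Submodule.span_union, hx]
    simp
  · rintro ⟨xb, hxb⟩
    choose x hxl using fun i => Submodule.Quotient.mk_surjective _ (xb i)
    refine ⟨x, ?_⟩
    have hpix : (π ∘ x) = xb := funext fun i => hxl i
    have h1 : Submodule.span (R ⧸ I) (π '' (g ∪ Set.range x)) = ⊤ := by
      rw [Set.image_union, Submodule.span_union,
        show π '' Set.range x = Set.range xb from by rw [← Set.range_comp, hpix], hxb]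
    rw [T1c I, Submodule.span_union] at h1
    have h2 : (I • ⊤ : Submodule R M) ≤
        Submodule.span R g ⊔ Submodule.span R (Set.range x) :=
      le_trans hple le_sup_left
    rwa [sup_eq_left.mpr h2] at h1

end Transfer


variable (p : ℕ) [Fact p.Prime] (k : Type*) [Field k] [IsAlgClosed k] [CharP k p]
variable (M : Type*) [AddCommGroup M] [Module (WittVector p k) M]

/-- Let `M` be a non-zero bi-nilpotent Dieudonné module over `k` generated by
`z ∈ M`, with `d = dim_k (M/FM)` and `c = dim_k (M/VM)`.  Then the family consisting of
`F^i z` for `1 ≤ i ≤ c` together with `V^i z` for `0 ≤ i ≤ d-1` is a `W(k)`-basis of `M`;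
in particular `M` has rank `h = c + d`. -/
theorem basis_of_cyclic_dieudonne_module
    -- `M` is a free `W(k)`-module of finite rank, non-zero
    [Module.Free (WittVector p k) M] [Module.Finite (WittVector p k) M] [Nontrivial M]
    -- `F` is `σ`-semilinear, `V` is `σ⁻¹`-semilinear, and `F ∘ V = V ∘ F = p·id`
    (F V : M → M)
    (hFadd : ∀ x y, F (x + y) = F x + F y)
    (hVadd : ∀ x y, V (x + y) = V x + V y)
    (hFsmul : ∀ (a : WittVector p k) (x : M), F (a • x) = WittVector.frobeniusEquiv p k a • F x)
    (hVsmul : ∀ (a : WittVector p k) (x : M),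
      V (a • x) = (WittVector.frobeniusEquiv p k).symm a • V x)
    (hFV : ∀ x, F (V x) = (p : WittVector p k) • x)
    (hVF : ∀ x, V (F x) = (p : WittVector p k) • x)
    -- `M` is bi-nilpotent: `F` and `V` are nilpotent on `M/pM`
    (hFnil : ∃ n : ℕ, ∀ x : M, ∃ y : M, F^[n] x = (p : WittVector p k) • y)
    (hVnil : ∃ n : ℕ, ∀ x : M, ∃ y : M, V^[n] x = (p : WittVector p k) • y)
    -- `z` generates `M`: the only `W(k)`-submodule containing `z` stable under `F` and `V` is `M`
    (z : M)
    (hz : ∀ P : Submodule (WittVector p k) M,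
      z ∈ P → (∀ x ∈ P, F x ∈ P) → (∀ x ∈ P, V x ∈ P) → P = ⊤)
    -- `d = dim_k (M/FM)`: `d` is the least number of elements generating `M` over `FM`
    (c d : ℕ)
    (hd : IsLeast {n : ℕ | ∃ x : Fin n → M,
      Submodule.span (WittVector p k) (Set.range F) ⊔
        Submodule.span (WittVector p k) (Set.range x) = ⊤} d)
    -- `c = dim_k (M/VM)`
    (hc : IsLeast {n : ℕ | ∃ x : Fin n → M,
      Submodule.span (WittVector p k) (Set.range V) ⊔
        Submodule.span (WittVector p k) (Set.range x) = ⊤} c) :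
    (∃ bas : Basis (Fin c ⊕ Fin d) (WittVector p k) M,
      (∀ i : Fin c, bas (Sum.inl i) = F^[(i : ℕ) + 1] z) ∧
      (∀ i : Fin d, bas (Sum.inr i) = V^[(i : ℕ)] z)) ∧
    Module.finrank (WittVector p k) M = c + d := by
  classical
  haveI : IsDiscreteValuationRing (WittVector p k) := WittVector.isDiscreteValuationRing
  set σ : WittVector p k ≃+* WittVector p k := WittVector.frobeniusEquiv p k with hσdef
  set I : Ideal (WittVector p k) := Ideal.span {(p : WittVector p k)} with hIdef
  have hIeq : IsLocalRing.maximalIdeal (WittVector p k) = I :=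
    (WittVector.irreducible p).maximalIdeal_eq
  haveI hImax : I.IsMaximal := hIeq ▸ IsLocalRing.maximalIdeal.isMaximal _
  letI : Field (WittVector p k ⧸ I) := Ideal.Quotient.field I
  set pM : Submodule (WittVector p k) M := I • ⊤ with hpMdef
  -- basic membership facts
  have keyI : ∀ a : WittVector p k, a ∈ I ↔ ∃ w, a = (p : WittVector p k) * w := by
    intro a; rw [hIdef, Ideal.mem_span_singleton]; rfl
  have key0 : ∀ x : M, x ∈ pM ↔ ∃ y, x = (p : WittVector p k) • y := by
    intro x
    constructor
    · intro hx
      refine Submodule.smul_induction_on hx ?_ ?_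
      · rintro r hr n -
        obtain ⟨w, rfl⟩ := (keyI r).1 hr
        exact ⟨w • n, by rw [mul_smul]⟩
      · rintro x y ⟨x', rfl⟩ ⟨y', rfl⟩
        exact ⟨x' + y', by rw [smul_add]⟩
    · rintro ⟨y, rfl⟩
      exact Submodule.smul_mem_smul ((keyI _).2 ⟨1, (mul_one _).symm⟩) trivial
  have hppM : ∀ y : M, (p : WittVector p k) • y ∈ pM := fun y => (key0 _).2 ⟨y, rfl⟩
  have keyIP : ∀ a ∈ I, ∀ x : M, a • x ∈ pM := by
    rintro a ha x
    obtain ⟨w, rfl⟩ := (keyI a).1 ha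
    rw [mul_smul]
    exact hppM _
  have keyq : ∀ (a : WittVector p k) (x : M), a • x ∈ pM → x ∉ pM → a ∈ I := by
    intro a x hax hx
    by_contra ha
    have hu : IsUnit a := by
      by_contra hna
      exact ha (hIeq ▸ (IsLocalRing.mem_maximalIdeal a).2 hna)
    obtain ⟨u, rfl⟩ := hu
    refine hx ?_
    have h2 := pM.smul_mem (↑u⁻¹ : WittVector p k) hax
    rwa [smul_smul, Units.inv_mul, one_smul] at h2
  have hσI : ∀ a : WittVector p k, σ a ∈ I ↔ a ∈ I := by
    intro a
    constructor
    · intro h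
      obtain ⟨w, hw⟩ := (keyI _).1 h
      refine (keyI a).2 ⟨σ.symm w, ?_⟩
      have := congrArg σ.symm hw
      simpa [map_mul] using this
    · intro h
      obtain ⟨w, rfl⟩ := (keyI a).1 h
      exact (keyI _).2 ⟨σ w, by simp [map_mul]⟩
  have hσI' : ∀ a : WittVector p k, σ.symm a ∈ I ↔ a ∈ I := by
    intro a
    constructor
    · intro h
      have := (hσI _).2 h
      simpa using this
    · intro h
      obtain ⟨w, rfl⟩ := (keyI a).1 h
      exact (keyI _).2 ⟨σ.symm w, by simp [map_mul]⟩
  have hFpM : ∀ x ∈ pM, F x ∈ pM := by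
    intro x hx
    obtain ⟨y, rfl⟩ := (key0 x).1 hx
    rw [hFsmul]
    exact keyIP _ ((hσI _).2 ((keyI _).2 ⟨1, (mul_one _).symm⟩)) _
  have hVpM : ∀ x ∈ pM, V x ∈ pM := by
    intro x hx
    obtain ⟨y, rfl⟩ := (key0 x).1 hx
    rw [hVsmul]
    exact keyIP _ ((hσI' _).2 ((keyI _).2 ⟨1, (mul_one _).symm⟩)) _
  -- V is injective
  have hpnz : (p : WittVector p k) ≠ 0 := WittVector.p_nonzero p k
  have hVinj : ∀ x y : M, V x = V y → x = y := by
    intro x y h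
    have h2 : (p : WittVector p k) • x = (p : WittVector p k) • y := by
      rw [← hFV x, ← hFV y, h]
    have h3 : (p : WittVector p k) • (x - y) = 0 := by
      rw [smul_sub, h2, sub_self]
    rcases smul_eq_zero.1 h3 with h4 | h4
    · exact absurd h4 hpnz
    · exact sub_eq_zero.1 h4
  -- the generating submodule
  set P : Submodule (WittVector p k) M :=
    Submodule.span (WittVector p k)
      (Set.range (fun n => F^[n] z) ∪ Set.range (fun n => V^[n] z)) with hPdef
  have hPF : ∀ x ∈ P, F x ∈ P := by
    intro x hx
    induction hx using Submodule.span_induction with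
    | mem u hu =>
      rcases hu with ⟨n, rfl⟩ | ⟨n, rfl⟩
      · exact Submodule.subset_span (Or.inl ⟨n + 1, Function.iterate_succ_apply' F n z⟩)
      · cases n with
        | zero => exact Submodule.subset_span (Or.inl ⟨1, rfl⟩)
        | succ m =>
          have : F (V^[m + 1] z) = (p : WittVector p k) • V^[m] z := by
            rw [Function.iterate_succ_apply' V, hFV]
          rw [this]
          exact Submodule.smul_mem _ _ (Submodule.subset_span (Or.inr ⟨m, rfl⟩))
    | zero => rw [F_zero hFadd]; exact Submodule.zero_mem _
    | add u v _ _ hu hv => rw [hFadd]; exact Submodule.add_mem _ hu hv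
    | smul a u _ hu => rw [hFsmul]; exact Submodule.smul_mem _ _ hu
  have hPV : ∀ x ∈ P, V x ∈ P := by
    intro x hx
    induction hx using Submodule.span_induction with
    | mem u hu =>
      rcases hu with ⟨n, rfl⟩ | ⟨n, rfl⟩
      · cases n with
        | zero => exact Submodule.subset_span (Or.inr ⟨1, rfl⟩)
        | succ m =>
          have : V (F^[m + 1] z) = (p : WittVector p k) • F^[m] z := by
            rw [Function.iterate_succ_apply' F, hVF]
          rw [this]
          exact Submodule.smul_mem _ _ (Submodule.subset_span (Or.inl ⟨m, rfl⟩))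
      · exact Submodule.subset_span (Or.inr ⟨n + 1, Function.iterate_succ_apply' V n z⟩)
    | zero => rw [F_zero hVadd]; exact Submodule.zero_mem _
    | add u v _ _ hu hv => rw [hVadd]; exact Submodule.add_mem _ hu hv
    | smul a u _ hu => rw [hVsmul]; exact Submodule.smul_mem _ _ hu
  have hP : P = ⊤ := hz P (Submodule.subset_span (Or.inl ⟨0, rfl⟩)) hPF hPV
  -- nilpotence indices
  have hsex : ∃ m : ℕ, F^[m + 1] z ∈ pM := by
    obtain ⟨n, hn⟩ := hFnil
    obtain ⟨y, hy⟩ := hn (F z)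
    exact ⟨n, by rw [Function.iterate_succ_apply F, hy]; exact hppM y⟩
  have htex : ∃ m : ℕ, V^[m + 1] z ∈ pM := by
    obtain ⟨n, hn⟩ := hVnil
    obtain ⟨y, hy⟩ := hn (V z)
    exact ⟨n, by rw [Function.iterate_succ_apply V, hy]; exact hppM y⟩
  set s : ℕ := Nat.find hsex with hsdef
  set t : ℕ := Nat.find htex with htdef
  have hs1 : F^[s + 1] z ∈ pM := Nat.find_spec hsex
  have ht1 : V^[t + 1] z ∈ pM := Nat.find_spec htex
  have hFtail : ∀ m, s < m → F^[m] z ∈ pM := by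
    intro m hm
    have : m = (m - (s + 1)) + (s + 1) := by omega
    rw [this, Function.iterate_add_apply]
    exact iter_mem hFpM _ _ hs1
  have hVtail : ∀ m, t < m → V^[m] z ∈ pM := by
    intro m hm
    have : m = (m - (t + 1)) + (t + 1) := by omega
    rw [this, Function.iterate_add_apply]
    exact iter_mem hVpM _ _ ht1
  have hsnot : 0 < s → F^[s] z ∉ pM := by
    intro hs
    have := Nat.find_min hsex (m := s - 1) (by omega)
    have h2 : s - 1 + 1 = s := by omega
    rwa [h2] at this
  have htnot : 0 < t → V^[t] z ∉ pM := by
    intro ht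
    have := Nat.find_min htex (m := t - 1) (by omega)
    have h2 : t - 1 + 1 = t := by omega
    rwa [h2] at this
  -- independence of the two families in M
  have hfind : ∀ a : Fin s → WittVector p k,
      (∑ i, a i • F^[(i : ℕ) + 1] z) ∈ pM → ∀ i, a i ∈ I :=
    indep_mod hFadd hFsmul I hσI pM hFpM keyIP keyq z s hFtail hsnot
  have hvind : ∀ a : Fin t → WittVector p k,
      (∑ i, a i • V^[(i : ℕ) + 1] z) ∈ pM → ∀ i, a i ∈ I :=
    indep_mod hVadd hVsmul I hσI' pM hVpM keyIP keyq z t hVtail htnot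
  -- the combined family
  set G : (Fin s ⊕ Fin t) → M :=
    Sum.elim (fun i : Fin s => F^[(i : ℕ) + 1] z) (fun j : Fin t => V^[(j : ℕ)] z) with hGdef
  have hGind : ∀ a : (Fin s ⊕ Fin t) → WittVector p k,
      (∑ u, a u • G u) ∈ pM → ∀ u, a u ∈ I := by
    intro a ha
    have hV1 : V (∑ u, a u • G u) ∈ pM := hVpM _ ha
    have hVs : V (∑ u, a u • G u) = ∑ u, V (a u • G u) := by
      simpa using iter_sum hVadd Finset.univ (fun u => a u • G u) 1
    rw [hVs, Fintype.sum_sum_type] at hV1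
    have he1 : ∀ i : Fin s, V (a (Sum.inl i) • G (Sum.inl i))
        = σ.symm (a (Sum.inl i)) • ((p : WittVector p k) • F^[(i : ℕ)] z) := by
      intro i
      rw [hVsmul]
      congr 1
      show V (F^[(i : ℕ) + 1] z) = _
      rw [Function.iterate_succ_apply' F, hVF]
    have he2 : ∀ j : Fin t, V (a (Sum.inr j) • G (Sum.inr j))
        = σ.symm (a (Sum.inr j)) • V^[(j : ℕ) + 1] z := by
      intro j
      rw [hVsmul]
      congr 1
      show V (V^[(j : ℕ)] z) = _
      rw [Function.iterate_succ_apply' V]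
    simp only [he1, he2] at hV1
    have hS1 : (∑ i : Fin s, σ.symm (a (Sum.inl i)) • ((p : WittVector p k) • F^[(i : ℕ)] z))
        ∈ pM := by
      refine Submodule.sum_mem _ ?_
      intro i _
      rw [smul_comm]
      exact hppM _
    have hS2 : (∑ j : Fin t, σ.symm (a (Sum.inr j)) • V^[(j : ℕ) + 1] z) ∈ pM := by
      have := Submodule.sub_mem _ hV1 hS1
      simpa using this
    have hbeta : ∀ j : Fin t, a (Sum.inr j) ∈ I := by
      intro j
      have := hvind _ hS2 j
      rwa [hσI'] at this
    have hS3 : (∑ j : Fin t, a (Sum.inr j) • G (Sum.inr j)) ∈ pM :=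
      Submodule.sum_mem _ fun j _ => keyIP _ (hbeta j) _
    have hS4 : (∑ i : Fin s, a (Sum.inl i) • F^[(i : ℕ) + 1] z) ∈ pM := by
      rw [Fintype.sum_sum_type] at ha
      have := Submodule.sub_mem _ ha hS3
      simpa [hGdef] using this
    have halpha : ∀ i : Fin s, a (Sum.inl i) ∈ I := hfind _ hS4
    rintro (i | j)
    · exact halpha i
    · exact hbeta j
  -- the span statements
  set QF : Submodule (WittVector p k) M :=
    Submodule.span (WittVector p k) (Set.range (fun i : Fin s => F^[(i : ℕ) + 1] z)) ⊔ pM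
    with hQFdef
  set QV : Submodule (WittVector p k) M :=
    Submodule.span (WittVector p k) (Set.range (fun j : Fin t => V^[(j : ℕ) + 1] z)) ⊔ pM
    with hQVdef
  have hCF : ∀ x : M, F x ∈ QF := by
    intro x
    have hx : x ∈ P := hP ▸ Submodule.mem_top
    induction hx using Submodule.span_induction with
    | mem u hu =>
      rcases hu with ⟨n, rfl⟩ | ⟨n, rfl⟩
      · rw [← Function.iterate_succ_apply' F]
        rcases le_or_gt (n + 1) s with h | h
        · exact Submodule.mem_sup_left (Submodule.subset_span
            ⟨⟨n, by omega⟩, rfl⟩)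
        · exact Submodule.mem_sup_right (hFtail _ (by omega))
      · cases n with
        | zero =>
          show F (F^[0] z) ∈ QF
          rw [← Function.iterate_succ_apply' F]
          rcases le_or_gt 1 s with h | h
          · exact Submodule.mem_sup_left (Submodule.subset_span ⟨⟨0, by omega⟩, rfl⟩)
          · exact Submodule.mem_sup_right (hFtail _ (by omega))
        | succ m =>
          have : F (V^[m + 1] z) = (p : WittVector p k) • V^[m] z := by
            rw [Function.iterate_succ_apply' V, hFV]
          rw [this]
          exact Submodule.mem_sup_right (hppM _)
    | zero => rw [F_zero hFadd]; exact Submodule.zero_mem _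
    | add u v _ _ hu hv => rw [hFadd]; exact Submodule.add_mem _ hu hv
    | smul a u _ hu => rw [hFsmul]; exact Submodule.smul_mem _ _ hu
  have hCV : ∀ x : M, V x ∈ QV := by
    intro x
    have hx : x ∈ P := hP ▸ Submodule.mem_top
    induction hx using Submodule.span_induction with
    | mem u hu =>
      rcases hu with ⟨n, rfl⟩ | ⟨n, rfl⟩
      · cases n with
        | zero =>
          show V (V^[0] z) ∈ QV
          rw [← Function.iterate_succ_apply' V]
          rcases le_or_gt 1 t with h | h
          · exact Submodule.mem_sup_left (Submodule.subset_span ⟨⟨0, by omega⟩, rfl⟩)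
          · exact Submodule.mem_sup_right (hVtail _ (by omega))
        | succ m =>
          have : V (F^[m + 1] z) = (p : WittVector p k) • F^[m] z := by
            rw [Function.iterate_succ_apply' F, hVF]
          rw [this]
          exact Submodule.mem_sup_right (hppM _)
      · rw [← Function.iterate_succ_apply' V]
        rcases le_or_gt (n + 1) t with h | h
        · exact Submodule.mem_sup_left (Submodule.subset_span ⟨⟨n, by omega⟩, rfl⟩)
        · exact Submodule.mem_sup_right (hVtail _ (by omega))
    | zero => rw [F_zero hVadd]; exact Submodule.zero_mem _
    | add u v _ _ hu hv => rw [hVadd]; exact Submodule.add_mem _ hu hv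
    | smul a u _ hu => rw [hVsmul]; exact Submodule.smul_mem _ _ hu
  -- V^[t] z lies in QF
  have hvtF : V^[t] z ∈ QF := by
    obtain ⟨y, hy⟩ := (key0 _).1 ht1
    have h2 : V (V^[t] z) = V (F y) := by
      rw [hVF, ← hy, Function.iterate_succ_apply' V]
    have h3 : V^[t] z = F y := hVinj _ _ h2
    rw [h3]
    exact hCF y
  -- N := span of the combined family; N ⊔ pM = ⊤
  set N : Submodule (WittVector p k) M :=
    Submodule.span (WittVector p k) (Set.range G) with hNdef
  have hQFN : QF ≤ N ⊔ pM := by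
    rw [hQFdef]
    refine sup_le ?_ le_sup_right
    refine le_trans (Submodule.span_le.2 ?_) le_sup_left
    rintro x ⟨i, rfl⟩
    exact Submodule.subset_span ⟨Sum.inl i, rfl⟩
  have hNtop : N ⊔ pM = ⊤ := by
    rw [eq_top_iff]
    intro x hxt
    clear hxt
    have hx : x ∈ P := hP ▸ Submodule.mem_top
    induction hx using Submodule.span_induction with
    | mem u hu =>
      have hVcase : ∀ n : ℕ, V^[n] z ∈ N ⊔ pM := by
        intro n
        rcases lt_trichotomy n t with h | h | h
        · exact Submodule.mem_sup_left (Submodule.subset_span ⟨Sum.inr ⟨n, h⟩, rfl⟩)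
        · subst h
          exact hQFN hvtF
        · exact Submodule.mem_sup_right (hVtail _ h)
      rcases hu with ⟨n, rfl⟩ | ⟨n, rfl⟩
      · cases n with
        | zero => exact hVcase 0
        | succ m =>
          rcases le_or_gt (m + 1) s with h | h
          · exact Submodule.mem_sup_left (Submodule.subset_span ⟨Sum.inl ⟨m, by omega⟩, rfl⟩)
          · exact Submodule.mem_sup_right (hFtail _ (by omega))
      · exact hVcase n
    | zero => exact Submodule.zero_mem _
    | add u v _ _ hu hv => exact Submodule.add_mem _ hu hv
    | smul a u _ hu => exact Submodule.smul_mem _ _ hu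
  have hNeq : N = ⊤ := by
    have hfg : (⊤ : Submodule (WittVector p k) M).FG := Module.finite_def.1 ‹_›
    have hjac : I ≤ Ideal.jacobson ⊥ := by
      rw [IsLocalRing.jacobson_eq_maximalIdeal ⊥ bot_ne_top, hIeq]
    have hNN : (⊤ : Submodule (WittVector p k) M) ≤
        N ⊔ I • (⊤ : Submodule (WittVector p k) M) := le_of_eq hNtop.symm
    have := Submodule.le_of_le_smul_of_le_jacobson_bot hfg hjac hNN
    exact le_antisymm le_top this
  -- now the dimension count over the residue field
  have hπ : ∀ x : M, (Submodule.mkQ (I • ⊤ : Submodule (WittVector p k) M)) x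
      = Submodule.Quotient.mk x := fun _ => rfl
  set bW := Module.Free.chooseBasis (WittVector p k) M with hbWdef
  set bk := quotientBasis I bW with hbkdef
  haveI hfd : FiniteDimensional (WittVector p k ⧸ I)
      (M ⧸ (I • ⊤ : Submodule (WittVector p k) M)) :=
    Module.Finite.of_basis bk
  have hrM : Module.finrank (WittVector p k) M =
      Module.finrank (WittVector p k ⧸ I) (M ⧸ (I • ⊤ : Submodule (WittVector p k) M)) := by
    rw [Module.finrank_eq_card_chooseBasisIndex, Module.finrank_eq_card_basis bk]
  have hpMF : pM ≤ Submodule.span (WittVector p k) (Set.range F) := by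
    intro x hx
    obtain ⟨y, rfl⟩ := (key0 x).1 hx
    exact Submodule.subset_span ⟨V y, hFV y⟩
  have hpMV : pM ≤ Submodule.span (WittVector p k) (Set.range V) := by
    intro x hx
    obtain ⟨y, rfl⟩ := (key0 x).1 hx
    exact Submodule.subset_span ⟨F y, hVF y⟩
  have hdeq : d = Module.finrank (WittVector p k ⧸ I)
      ((M ⧸ (I • ⊤ : Submodule (WittVector p k) M)) ⧸ (Submodule.span (WittVector p k ⧸ I) ((Submodule.mkQ (I • ⊤ : Submodule (WittVector p k) M)) '' Set.range F))) := by
    have h1 := isLeast_gen_over (WittVector p k ⧸ I)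
      (M ⧸ (I • ⊤ : Submodule (WittVector p k) M)) (Submodule.span (WittVector p k ⧸ I) ((Submodule.mkQ (I • ⊤ : Submodule (WittVector p k) M)) '' Set.range F))
    have h2 : IsLeast {n : ℕ | ∃ x : Fin n → M,
        Submodule.span (WittVector p k) (Set.range F) ⊔
          Submodule.span (WittVector p k) (Set.range x) = ⊤}
        (Module.finrank (WittVector p k ⧸ I)
          ((M ⧸ (I • ⊤ : Submodule (WittVector p k) M)) ⧸ (Submodule.span (WittVector p k ⧸ I) ((Submodule.mkQ (I • ⊤ : Submodule (WittVector p k) M)) '' Set.range F)))) := by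
      rw [Tsets I (Set.range F) hpMF]
      exact h1
    exact IsLeast.unique hd h2
  have hceq : c = Module.finrank (WittVector p k ⧸ I)
      ((M ⧸ (I • ⊤ : Submodule (WittVector p k) M)) ⧸ (Submodule.span (WittVector p k ⧸ I) ((Submodule.mkQ (I • ⊤ : Submodule (WittVector p k) M)) '' Set.range V))) := by
    have h1 := isLeast_gen_over (WittVector p k ⧸ I)
      (M ⧸ (I • ⊤ : Submodule (WittVector p k) M)) (Submodule.span (WittVector p k ⧸ I) ((Submodule.mkQ (I • ⊤ : Submodule (WittVector p k) M)) '' Set.range V))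
    have h2 : IsLeast {n : ℕ | ∃ x : Fin n → M,
        Submodule.span (WittVector p k) (Set.range V) ⊔
          Submodule.span (WittVector p k) (Set.range x) = ⊤}
        (Module.finrank (WittVector p k ⧸ I)
          ((M ⧸ (I • ⊤ : Submodule (WittVector p k) M)) ⧸ (Submodule.span (WittVector p k ⧸ I) ((Submodule.mkQ (I • ⊤ : Submodule (WittVector p k) M)) '' Set.range V)))) := by
      rw [Tsets I (Set.range V) hpMV]
      exact h1
    exact IsLeast.unique hc h2
  -- UF is spanned by the images of F^[i+1] z, i < s
  have hUFeq : (Submodule.span (WittVector p k ⧸ I) ((Submodule.mkQ (I • ⊤ : Submodule (WittVector p k) M)) '' Set.range F)) = Submodule.span (WittVector p k ⧸ I)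
      (Set.range (fun i : Fin s =>
        (Submodule.mkQ (I • ⊤ : Submodule (WittVector p k) M)) (F^[(i : ℕ) + 1] z))) := by
    apply le_antisymm
    · refine Submodule.span_le.2 ?_
      rintro y ⟨w, ⟨x, rfl⟩, rfl⟩
      have h1 : F x ∈ QF := hCF x
      have h2 := T1a I (T := Set.range (fun i : Fin s => F^[(i : ℕ) + 1] z)) h1
      rwa [← Set.range_comp] at h2
    · refine Submodule.span_le.2 ?_
      rintro y ⟨i, rfl⟩
      refine Submodule.subset_span ⟨F (F^[(i : ℕ)] z), ⟨F^[(i : ℕ)] z, rfl⟩, ?_⟩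
      rw [← Function.iterate_succ_apply' F]
  have hUVeq : (Submodule.span (WittVector p k ⧸ I) ((Submodule.mkQ (I • ⊤ : Submodule (WittVector p k) M)) '' Set.range V)) = Submodule.span (WittVector p k ⧸ I)
      (Set.range (fun j : Fin t =>
        (Submodule.mkQ (I • ⊤ : Submodule (WittVector p k) M)) (V^[(j : ℕ) + 1] z))) := by
    apply le_antisymm
    · refine Submodule.span_le.2 ?_
      rintro y ⟨w, ⟨x, rfl⟩, rfl⟩
      have h1 : V x ∈ QV := hCV x
      have h2 := T1a I (T := Set.range (fun j : Fin t => V^[(j : ℕ) + 1] z)) h1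
      rwa [← Set.range_comp] at h2
    · refine Submodule.span_le.2 ?_
      rintro y ⟨j, rfl⟩
      refine Submodule.subset_span ⟨V (V^[(j : ℕ)] z), ⟨V^[(j : ℕ)] z, rfl⟩, ?_⟩
      rw [← Function.iterate_succ_apply' V]
  have hUFrank : Module.finrank (WittVector p k ⧸ I) (Submodule.span (WittVector p k ⧸ I) ((Submodule.mkQ (I • ⊤ : Submodule (WittVector p k) M)) '' Set.range F)) = s := by
    rw [hUFeq]
    have hli : LinearIndependent (WittVector p k ⧸ I)
        (fun i : Fin s =>
          (Submodule.mkQ (I • ⊤ : Submodule (WittVector p k) M)) (F^[(i : ℕ) + 1] z)) :=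
      T2 I _ hfind
    rw [finrank_span_eq_card hli, Fintype.card_fin]
  have hUVrank : Module.finrank (WittVector p k ⧸ I) (Submodule.span (WittVector p k ⧸ I) ((Submodule.mkQ (I • ⊤ : Submodule (WittVector p k) M)) '' Set.range V)) = t := by
    rw [hUVeq]
    have hli : LinearIndependent (WittVector p k ⧸ I)
        (fun j : Fin t =>
          (Submodule.mkQ (I • ⊤ : Submodule (WittVector p k) M)) (V^[(j : ℕ) + 1] z)) :=
      T2 I _ hvind
    rw [finrank_span_eq_card hli, Fintype.card_fin]
  have hdsum : Module.finrank (WittVector p k ⧸ I)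
      ((M ⧸ (I • ⊤ : Submodule (WittVector p k) M)) ⧸ (Submodule.span (WittVector p k ⧸ I) ((Submodule.mkQ (I • ⊤ : Submodule (WittVector p k) M)) '' Set.range F))) + s =
      Module.finrank (WittVector p k ⧸ I) (M ⧸ (I • ⊤ : Submodule (WittVector p k) M)) := by
    rw [← hUFrank]
    exact Submodule.finrank_quotient_add_finrank (Submodule.span (WittVector p k ⧸ I) ((Submodule.mkQ (I • ⊤ : Submodule (WittVector p k) M)) '' Set.range F))
  have hcsum : Module.finrank (WittVector p k ⧸ I)
      ((M ⧸ (I • ⊤ : Submodule (WittVector p k) M)) ⧸ (Submodule.span (WittVector p k ⧸ I) ((Submodule.mkQ (I • ⊤ : Submodule (WittVector p k) M)) '' Set.range V))) + t =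
      Module.finrank (WittVector p k ⧸ I) (M ⧸ (I • ⊤ : Submodule (WittVector p k) M)) := by
    rw [← hUVrank]
    exact Submodule.finrank_quotient_add_finrank (Submodule.span (WittVector p k ⧸ I) ((Submodule.mkQ (I • ⊤ : Submodule (WittVector p k) M)) '' Set.range V))
  -- r = s + t
  have hGspan : Submodule.span (WittVector p k ⧸ I)
      (Set.range (fun u => (Submodule.mkQ (I • ⊤ : Submodule (WittVector p k) M)) (G u))) = ⊤ := by
    have h1 := (T1c (M := M) I (T := Set.range G)).2 (by rw [← hNdef, hNtop])
    rwa [show (Set.range fun u =>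
        (Submodule.mkQ (I • ⊤ : Submodule (WittVector p k) M)) (G u)) =
        (Submodule.mkQ (I • ⊤ : Submodule (WittVector p k) M)) '' Set.range G from
      Set.range_comp _ _]
  have hrle : Module.finrank (WittVector p k ⧸ I)
      (M ⧸ (I • ⊤ : Submodule (WittVector p k) M)) ≤ s + t := by
    have h1 : Module.finrank (WittVector p k ⧸ I)
        (M ⧸ (I • ⊤ : Submodule (WittVector p k) M)) =
        Module.finrank (WittVector p k ⧸ I) (Submodule.span (WittVector p k ⧸ I)
          (Set.range (fun u =>
            (Submodule.mkQ (I • ⊤ : Submodule (WittVector p k) M)) (G u)))) := by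
      rw [hGspan, finrank_top]
    have h2 : (Set.range (fun u =>
        (Submodule.mkQ (I • ⊤ : Submodule (WittVector p k) M)) (G u))).finrank
        (WittVector p k ⧸ I) ≤ Fintype.card (Fin s ⊕ Fin t) :=
      finrank_range_le_card _
    rw [h1]
    simpa [Set.finrank] using h2
  have hrge : s + t ≤ Module.finrank (WittVector p k ⧸ I)
      (M ⧸ (I • ⊤ : Submodule (WittVector p k) M)) := by
    have hli : LinearIndependent (WittVector p k ⧸ I)
        (fun u => (Submodule.mkQ (I • ⊤ : Submodule (WittVector p k) M)) (G u)) :=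
      T2 I _ hGind
    have := hli.fintype_card_le_finrank
    simpa using this
  have hcs : c = s := by omega
  have hdt : d = t := by omega
  subst hcs
  subst hdt
  -- conclude: G is a basis of M
  have hfrk : Module.finrank (WittVector p k) M = s + t := by
    rw [hrM]; omega
  have hGlin : LinearIndependent (WittVector p k) G := by
    have hcard : Fintype.card (Module.Free.ChooseBasisIndex (WittVector p k) M) =
        Fintype.card (Fin s ⊕ Fin t) := by
      have h1 : Module.finrank (WittVector p k) M =
          Fintype.card (Module.Free.ChooseBasisIndex (WittVector p k) M) :=
        Module.finrank_eq_card_chooseBasisIndex _ _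
      simp only [Fintype.card_sum, Fintype.card_fin]
      omega
    set e : M ≃ₗ[WittVector p k] ((Fin s ⊕ Fin t) →₀ WittVector p k) :=
      bW.repr.trans (Finsupp.domLCongr (Fintype.equivOfCardEq hcard)) with hedef
    set φ : ((Fin s ⊕ Fin t) →₀ WittVector p k) →ₗ[WittVector p k] M :=
      Finsupp.linearCombination (WittVector p k) G with hφdef
    have hφsurj : Function.Surjective φ := by
      rw [← LinearMap.range_eq_top, hφdef, Finsupp.range_linearCombination, ← hNdef, hNeq]
    have hψ : Function.Surjective (φ.comp e.toLinearMap) :=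
      hφsurj.comp e.surjective
    haveI : IsNoetherianRing (WittVector p k) := PrincipalIdealRing.isNoetherianRing
    have hψinj : Function.Injective (φ.comp e.toLinearMap) :=
      OrzechProperty.injective_of_surjective_endomorphism _ hψ
    have hφinj : Function.Injective φ := by
      intro x y hxy
      have h3 : (φ.comp e.toLinearMap) (e.symm x) = (φ.comp e.toLinearMap) (e.symm y) := by
        simp [LinearMap.comp_apply, hxy]
      have := hψinj h3
      exact e.symm.injective this
    exact hφinj
  have hGtop : ⊤ ≤ Submodule.span (WittVector p k) (Set.range G) := by
    rw [← hNdef, hNeq]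
  refine ⟨⟨Basis.mk hGlin hGtop, ?_, ?_⟩, ?_⟩
  · intro i
    rw [Basis.mk_apply, hGdef, Sum.elim_inl]
  · intro i
    rw [Basis.mk_apply, hGdef, Sum.elim_inr]
  · rw [hfrk]

end DieudonneStmt
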